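/- Let F = ℝ or ℂ, m ≤ n ≤ 2m, ℓ ≤ ⌊n/2⌋. Let X_{11}, X_{22}, Y be nonsingular matrices of sizes (n−ℓ)×(n−ℓ), (m+ℓ−n)×(m+ℓ−n), ℓ×ℓ respectively, and let X_{12} be arbitrary. Define m×n matrices A = [[X_{11}, X_{12}, O],[O, X_{22}, O]] and B = [[O, Y],[O, O]] (with Y positioned in the last ℓ columns of the first ℓ rows). Then the tensor rank of (A;B) over F equals m + ℓ. -/

import Mathlib

open Matrix BigOperators

/-- A pair of matrices `(A; B)` admits a simultaneous decomposition into `r`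
rank-one tensors. -/
def pairDecomp {F : Type*} [Field F] {m n : Type*} [Fintype m] [Fintype n] (r : ℕ)
    (A B : Matrix m n F) : Prop :=
  ∃ (a : Fin r → m → F) (b : Fin r → n → F) (α β : Fin r → F),
    A = ∑ i, α i • Matrix.vecMulVec (a i) (b i) ∧
    B = ∑ i, β i • Matrix.vecMulVec (a i) (b i)

/-- The tensor rank of the pair of matrices `(A; B)`. -/
noncomputable def pairRank {F : Type*} [Field F] {m n : Type*} [Fintype m] [Fintype n]
    (A B : Matrix m n F) : ℕ :=
  sInf {r | pairDecomp r A B}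

/-- The pair `(A; B)` of rectangular matrices is diagonalizable. -/
def pairDiag {F : Type*} [Field F] {m n : ℕ} (A B : Matrix (Fin m) (Fin n) F) : Prop :=
  ∃ (P : (Matrix (Fin m) (Fin m) F)ˣ) (Q : (Matrix (Fin n) (Fin n) F)ˣ),
    (∀ (i : Fin m) (j : Fin n), (i : ℕ) ≠ (j : ℕ) → ((P : Matrix (Fin m) (Fin m) F) * A * (Q : Matrix (Fin n) (Fin n) F)) i j = 0) ∧
    (∀ (i : Fin m) (j : Fin n), (i : ℕ) ≠ (j : ℕ) → ((P : Matrix (Fin m) (Fin m) F) * B * (Q : Matrix (Fin n) (Fin n) F)) i j = 0)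

/-- The nilpotent Jordan block of size `k`. -/
def jordanNil {F : Type*} [Field F] (k : ℕ) : Matrix (Fin k) (Fin k) F :=
  Matrix.of fun i j => if (i : ℕ) + 1 = (j : ℕ) then 1 else 0

set_option maxHeartbeats 1000000
set_option synthInstance.maxHeartbeats 1000000

open Matrix LinearMap Module Submodule Finset

section AuxiliaryLemmas


lemma diag_sq_zero {F : Type*} [Field F] {r : ℕ} (t : Fin r → F) (w : Fin r → F)
    (h : (Matrix.diagonal t).mulVecLin ((Matrix.diagonal t).mulVecLin w) = 0) :
    (Matrix.diagonal t).mulVecLin w = 0 := by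
  funext i
  have hi := congrFun h i
  simp only [Matrix.mulVecLin_apply, Matrix.mulVec_diagonal, Pi.zero_apply] at hi ⊢
  rcases mul_eq_zero.mp hi with h1 | h1
  · simp [h1]
  · exact h1

lemma core_bound {F : Type*} [Field F] {m n r : ℕ}
    (U : Matrix (Fin m) (Fin r) F) (V : Matrix (Fin r) (Fin n) F) (t : Fin r → F)
    (Wb : (Fin n → F) →ₗ[F] (Fin n → F))
    (hsurj : Function.Surjective (U * V).mulVecLin)
    (hW2 : ∀ x, Wb (Wb x) = 0)
    (hAW : ∀ x, (U * V).mulVecLin (Wb x) = (U * Matrix.diagonal t * V).mulVecLin x)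
    (hdisj : ∀ x ∈ LinearMap.range Wb, (U * V).mulVecLin x = 0 → x = 0) :
    m + Module.finrank F (LinearMap.range Wb) ≤ r := by
  classical
  set 𝒜 : (Fin n → F) →ₗ[F] (Fin m → F) := (U * V).mulVecLin with h𝒜
  set 𝒰 : (Fin r → F) →ₗ[F] (Fin m → F) := U.mulVecLin
  set 𝒱 : (Fin n → F) →ₗ[F] (Fin r → F) := V.mulVecLin
  set 𝒟 : (Fin r → F) →ₗ[F] (Fin r → F) := (Matrix.diagonal t).mulVecLin with h𝒟
  have hcomp : ∀ x, 𝒜 x = 𝒰 (𝒱 x) := by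
    intro x; rw [h𝒜, Matrix.mulVecLin_mul]; rfl
  have hUDV : ∀ x, (U * Matrix.diagonal t * V).mulVecLin x = 𝒰 (𝒟 (𝒱 x)) := by
    intro x; rw [Matrix.mulVecLin_mul, Matrix.mulVecLin_mul]; rfl
  set G : Submodule F (Fin n → F) := LinearMap.range Wb with hG
  have hWbG : ∀ u : G, Wb (u : Fin n → F) = 0 := by
    rintro ⟨u, x, rfl⟩; exact hW2 x
  -- a complement S of ker 𝒜 containing G
  obtain ⟨C₀, hC₀⟩ := Submodule.exists_isCompl (LinearMap.ker 𝒜 ⊔ G)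
  set S : Submodule F (Fin n → F) := G ⊔ C₀ with hS
  have hGS : G ≤ S := le_sup_left
  have hSdisj : ∀ x ∈ S, 𝒜 x = 0 → x = 0 := by
    intro x hx hker
    rcases Submodule.mem_sup.mp hx with ⟨g, hg, c, hc, rfl⟩
    have hcmem : c ∈ (LinearMap.ker 𝒜 ⊔ G) ⊓ C₀ := by
      refine ⟨?_, hc⟩
      have : (g + c) - g ∈ LinearMap.ker 𝒜 ⊔ G := by
        exact sub_mem (Submodule.mem_sup_left (LinearMap.mem_ker.mpr hker))
          (Submodule.mem_sup_right hg)
      simpa using this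
    have hc0 : c = 0 := by
      have := hC₀.inf_eq_bot ▸ hcmem
      simpa using this
    subst hc0
    have hg0 : 𝒜 g = 0 := by simpa using hker
    simpa using hdisj g hg hg0
  set 𝒮₀ : Submodule F (Fin r → F) := Submodule.map 𝒱 S with h𝒮₀
  -- first estimate : finrank 𝒮₀ ≥ m
  have hm : m ≤ finrank F 𝒮₀ := by
    have htop : Submodule.map 𝒰 𝒮₀ = ⊤ := by
      rw [eq_top_iff]
      rintro y -
      obtain ⟨x, rfl⟩ := hsurj y
      have hx : x ∈ S ⊔ LinearMap.ker 𝒜 := by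
        have : S ⊔ LinearMap.ker 𝒜 = ⊤ := by
          rw [eq_top_iff, ← hC₀.sup_eq_top]
          rw [hS]
          intro z hz
          rcases Submodule.mem_sup.mp hz with ⟨a, ha, c, hc, rfl⟩
          rcases Submodule.mem_sup.mp ha with ⟨k, hk, g, hg, rfl⟩
          exact Submodule.add_mem _
            (Submodule.add_mem _
              (Submodule.mem_sup_right hk)
              (Submodule.mem_sup_left (hGS hg)))
            (Submodule.mem_sup_left (Submodule.mem_sup_right hc))
        simp [this]
      rcases Submodule.mem_sup.mp hx with ⟨s, hs, k, hk, rfl⟩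
      refine ⟨𝒱 s, Submodule.mem_map_of_mem hs, ?_⟩
      have : 𝒜 (s + k) = 𝒜 s := by
        simp [map_add, LinearMap.mem_ker.mp hk]
      rw [← hcomp, ← this]
    have : finrank F (Submodule.map 𝒰 𝒮₀) ≤ finrank F 𝒮₀ :=
      Submodule.finrank_map_le _ _
    rw [htop] at this
    simpa [finrank_top, Module.finrank_pi] using this
  -- the principle
  have principle : ∀ y : Fin n → F, 𝒟 (𝒱 y) ∈ 𝒮₀ → 𝒟 (𝒱 y) = 𝒱 (Wb y) := by
    intro y hy
    obtain ⟨s, hs, hVs⟩ := hy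
    have h1 : 𝒜 s = 𝒜 (Wb y) := by
      rw [hcomp, hVs, ← hUDV, hAW]
    have h2 : s - Wb y = 0 := by
      refine hSdisj _ (sub_mem hs (hGS (LinearMap.mem_range_self _ y))) ?_
      simp [map_sub, h1]
    have : s = Wb y := by
      have := sub_eq_zero.mp h2; exact this
    rw [← hVs, this]
  -- the quotient maps
  set Λ : G →ₗ[F] ((Fin r → F) ⧸ 𝒮₀) :=
    (𝒮₀.mkQ ∘ₗ (𝒟 ∘ₗ 𝒱)) ∘ₗ G.subtype with hΛ
  set N : Submodule F G := LinearMap.ker Λ with hNdef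
  have hN : ∀ u : G, u ∈ N → 𝒟 (𝒱 (u : Fin n → F)) = 0 := by
    intro u hu
    have h0' : 𝒮₀.mkQ (𝒟 (𝒱 (u : Fin n → F))) = 0 := by
      have := LinearMap.mem_ker.mp hu
      simpa [hΛ] using this
    have h1 : 𝒟 (𝒱 (u : Fin n → F)) ∈ 𝒮₀ := by
      rwa [Submodule.mkQ_apply, Submodule.Quotient.mk_eq_zero] at h0'
    rw [principle _ h1, hWbG u, map_zero]
  obtain ⟨σ, hσ⟩ := LinearMap.exists_rightInverse_of_surjective
    (Wb.rangeRestrict) (LinearMap.range_rangeRestrict Wb)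
  have hσ' : ∀ u : G, Wb (σ u) = (u : Fin n → F) := by
    intro u
    have := congrFun (congrArg (fun f => f.toFun) hσ) u
    simpa using congrArg Subtype.val this
  set Λ₂ : N →ₗ[F] (((Fin r → F) ⧸ 𝒮₀) ⧸ LinearMap.range Λ) :=
    (LinearMap.range Λ).mkQ ∘ₗ (𝒮₀.mkQ ∘ₗ (𝒟 ∘ₗ 𝒱)) ∘ₗ σ ∘ₗ N.subtype with hΛ₂
  have hker2 : ∀ u, Λ₂ u = 0 → u = 0 := by
    intro u hu
    have h0' : (LinearMap.range Λ).mkQ (𝒮₀.mkQ (𝒟 (𝒱 (σ (u : G))))) = 0 := by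
      simpa [hΛ₂] using hu
    have h1 : 𝒮₀.mkQ (𝒟 (𝒱 (σ (u : G)))) ∈ LinearMap.range Λ := by
      rwa [Submodule.mkQ_apply, Submodule.Quotient.mk_eq_zero] at h0'
    obtain ⟨u', hu'⟩ := h1
    have h2 : 𝒟 (𝒱 (σ (u : G) - (u' : Fin n → F))) ∈ 𝒮₀ := by
      have : 𝒮₀.mkQ (𝒟 (𝒱 (σ (u : G))) - 𝒟 (𝒱 (u' : Fin n → F))) = 0 := by
        rw [map_sub]
        have hΛu' : Λ u' = 𝒮₀.mkQ (𝒟 (𝒱 (u' : Fin n → F))) := by simp [hΛ]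
        rw [← hΛu', hu', sub_self]
      rw [Submodule.mkQ_apply, Submodule.Quotient.mk_eq_zero] at this
      simpa [map_sub] using this
    have h3 : 𝒟 (𝒱 (σ (u : G) - (u' : Fin n → F))) = 𝒱 ((u : G) : Fin n → F) := by
      rw [principle _ h2]
      congr 1
      rw [map_sub, hσ' (u : G), hWbG u', sub_zero]
    have h4 : 𝒟 (𝒟 (𝒱 (σ (u : G) - (u' : Fin n → F)))) = 0 := by
      rw [h3]
      exact hN (u : G) u.2
    have h5 := diag_sq_zero t _ h4
    rw [h3] at h5
    have h6 : ((u : G) : Fin n → F) = 0 := by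
      refine hdisj _ (u : G).2 ?_
      rw [hcomp, h5, map_zero]
    have : (u : G) = 0 := Subtype.ext h6
    exact Subtype.ext this
  have hinj : Function.Injective Λ₂ := by
    intro u v huv
    exact sub_eq_zero.mp (hker2 (u - v) (by have h := Λ₂.map_sub u v; rw [huv, sub_self] at h; exact h))
  -- counting
  have c1 : finrank F ((Fin r → F) ⧸ 𝒮₀) + finrank F 𝒮₀ = r := by
    rw [Submodule.finrank_quotient_add_finrank]
    simp [Module.finrank_pi]
  have c2 : finrank F (((Fin r → F) ⧸ 𝒮₀) ⧸ LinearMap.range Λ)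
      + finrank F (LinearMap.range Λ) = finrank F ((Fin r → F) ⧸ 𝒮₀) :=
    Submodule.finrank_quotient_add_finrank _
  have c3 : finrank F (LinearMap.range Λ) + finrank F N = finrank F G :=
    LinearMap.finrank_range_add_finrank_ker Λ
  have c4 : finrank F N ≤ finrank F (((Fin r → F) ⧸ 𝒮₀) ⧸ LinearMap.range Λ) :=
    LinearMap.finrank_le_finrank_of_injective hinj
  omega


lemma split3 {M : Type*} [AddCommMonoid M] (f : ℕ → M) (p q n : ℕ) (h2 : p + q ≤ n) :
    ∑ k ∈ Finset.range n, f k =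
      (∑ k ∈ Finset.range p, f k) + (∑ k ∈ Finset.range q, f (p + k))
        + (∑ k ∈ Finset.range (n - (p+q)), f (p + q + k)) := by
  rw [Finset.range_eq_Ico]
  rw [← Finset.sum_Ico_consecutive f (Nat.zero_le (p+q)) h2]
  rw [← Finset.sum_Ico_consecutive f (Nat.zero_le p) (Nat.le_add_right p q)]
  rw [Finset.sum_Ico_eq_sum_range (f := f) (m := p) (n := p + q)]
  rw [Finset.sum_Ico_eq_sum_range (f := f) (m := p + q) (n := n)]
  have e1 : p + q - p = q := by omega
  rw [e1, ← Finset.range_eq_Ico]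

lemma surj_aux {F : Type*} [Field F] {m n ℓ : ℕ}
    (hmn : m ≤ n) (hl2 : 2*ℓ ≤ n) (hlm : ℓ ≤ m)
    (X11 : Matrix (Fin (n-ℓ)) (Fin (n-ℓ)) F) (hX11 : IsUnit X11.det)
    (X22 : Matrix (Fin (m+ℓ-n)) (Fin (m+ℓ-n)) F) (hX22 : IsUnit X22.det)
    (M : Matrix (Fin m) (Fin n) F)
    (H1 : ∀ (i : Fin m) (j : Fin n) (hi : (i:ℕ) < n-ℓ) (hj : (j:ℕ) < n-ℓ),
        M i j = X11 ⟨i, hi⟩ ⟨j, hj⟩)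
    (H2 : ∀ (i : Fin m) (j : Fin n), n-ℓ ≤ (i:ℕ) → (j:ℕ) < n-ℓ → M i j = 0)
    (H3 : ∀ (i : Fin m) (j : Fin n) (hi : n-ℓ ≤ (i:ℕ)) (hj1 : n-ℓ ≤ (j:ℕ))
        (hj2 : (j:ℕ) < (n-ℓ)+(m+ℓ-n)),
        M i j = X22 ⟨(i:ℕ)-(n-ℓ), by have := i.isLt; omega⟩ ⟨(j:ℕ)-(n-ℓ), by omega⟩)
    (H4 : ∀ (i : Fin m) (j : Fin n), n-ℓ ≤ (i:ℕ) → (n-ℓ)+(m+ℓ-n) ≤ (j:ℕ) → M i j = 0) :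
    Function.Surjective M.mulVecLin := by
  classical
  intro y
  have hpq : (n-ℓ) + (m+ℓ-n) ≤ n := by omega
  set y2 : Fin (m+ℓ-n) → F := fun j => y ⟨(n-ℓ) + (j:ℕ), by have := j.isLt; omega⟩ with hy2
  set x2 : Fin (m+ℓ-n) → F := (X22⁻¹).mulVec y2 with hx2def
  have hx2 : X22.mulVec x2 = y2 := by
    rw [hx2def, Matrix.mulVec_mulVec, Matrix.mul_nonsing_inv _ hX22, Matrix.one_mulVec]
  set yhat : Fin (n-ℓ) → F := fun i =>
    if h : (i:ℕ) < m then
      (y ⟨i, h⟩ - ∑ j : Fin (m+ℓ-n),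
        M ⟨i, h⟩ ⟨(n-ℓ) + (j:ℕ), by have := j.isLt; omega⟩ * x2 j)
    else 0 with hyhat
  set x1 : Fin (n-ℓ) → F := (X11⁻¹).mulVec yhat with hx1def
  have hx1 : X11.mulVec x1 = yhat := by
    rw [hx1def, Matrix.mulVec_mulVec, Matrix.mul_nonsing_inv _ hX11, Matrix.one_mulVec]
  set x : Fin n → F := fun j =>
    if h : (j:ℕ) < n-ℓ then x1 ⟨j, h⟩
    else if h2 : (j:ℕ) < (n-ℓ) + (m+ℓ-n) then x2 ⟨(j:ℕ) - (n-ℓ), by omega⟩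
    else 0 with hx
  refine ⟨x, ?_⟩
  funext i
  set g : ℕ → F := fun k => if h : k < n then M i ⟨k, h⟩ * x ⟨k, h⟩ else 0 with hg
  have hsum : M.mulVecLin x i = ∑ k ∈ Finset.range n, g k := by
    rw [Matrix.mulVecLin_apply]
    show ∑ j : Fin n, M i j * x j = _
    rw [← Fin.sum_univ_eq_sum_range g n]
    refine Finset.sum_congr rfl fun j _ => ?_
    rw [hg]
    simp only [Fin.is_lt, dite_true, Fin.eta]
  rw [hsum, split3 g (n-ℓ) (m+ℓ-n) n hpq]
  have hS3 : ∑ k ∈ Finset.range (n - ((n-ℓ)+(m+ℓ-n))), g ((n-ℓ)+(m+ℓ-n)+k) = 0 := by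
    refine Finset.sum_eq_zero fun k hk => ?_
    have hk' := Finset.mem_range.mp hk
    rw [hg]
    simp only []
    rw [dif_pos (by omega)]
    have hxz : x ⟨(n-ℓ)+(m+ℓ-n)+k, by omega⟩ = 0 := by
      rw [hx]; simp only []
      rw [dif_neg (by omega), dif_neg (by omega)]
    rw [hxz, mul_zero]
  by_cases hi : (i:ℕ) < n-ℓ
  · -- X11 rows
    have hS1 : ∑ k ∈ Finset.range (n-ℓ), g k = yhat ⟨i, hi⟩ := by
      have e1 : ∑ k ∈ Finset.range (n-ℓ), g k
          = ∑ k ∈ Finset.range (n-ℓ),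
              (fun k => if h : k < n-ℓ then X11 ⟨i, hi⟩ ⟨k, h⟩ * x1 ⟨k, h⟩ else 0) k := by
        refine Finset.sum_congr rfl fun k hk => ?_
        have hk' := Finset.mem_range.mp hk
        rw [hg]
        simp only []
        rw [dif_pos (by omega), dif_pos hk']
        have hxk : x ⟨k, by omega⟩ = x1 ⟨k, hk'⟩ := by
          rw [hx]; simp only []; rw [dif_pos hk']
        rw [hxk, H1 i ⟨k, by omega⟩ hi hk']
      rw [e1, ← Fin.sum_univ_eq_sum_range
        (fun k => if h : k < n-ℓ then X11 ⟨i, hi⟩ ⟨k, h⟩ * x1 ⟨k, h⟩ else 0) (n-ℓ)]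
      have e2 : ∑ j : Fin (n-ℓ),
          (fun k => if h : k < n-ℓ then X11 ⟨i, hi⟩ ⟨k, h⟩ * x1 ⟨k, h⟩ else 0) (j:ℕ)
          = X11.mulVec x1 ⟨i, hi⟩ := by
        simp only [Fin.is_lt, dite_true, Fin.eta]
        rfl
      rw [e2, hx1]
    have hS2 : ∑ k ∈ Finset.range (m+ℓ-n), g ((n-ℓ)+k)
        = ∑ j : Fin (m+ℓ-n), M i ⟨(n-ℓ) + (j:ℕ), by have := j.isLt; omega⟩ * x2 j := by
      rw [← Fin.sum_univ_eq_sum_range (fun k => g ((n-ℓ)+k)) (m+ℓ-n)]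
      refine Finset.sum_congr rfl fun j _ => ?_
      have hj' := j.isLt
      rw [hg]
      simp only []
      rw [dif_pos (by omega)]
      have hxk : x ⟨(n-ℓ)+(j:ℕ), by omega⟩ = x2 j := by
        rw [hx]; simp only []
        rw [dif_neg (by omega), dif_pos (by omega)]
        congr 1
        ext
        simp
      rw [hxk]
    rw [hS1, hS2, hS3]
    rw [hyhat]
    simp only []
    rw [dif_pos (by have := i.isLt; omega)]
    have : (⟨(i:ℕ), by have := i.isLt; omega⟩ : Fin m) = i := by ext; rfl
    rw [this]
    ring
  · -- X22 rows
    push_neg at hi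
    have hS1 : ∑ k ∈ Finset.range (n-ℓ), g k = 0 := by
      refine Finset.sum_eq_zero fun k hk => ?_
      have hk' := Finset.mem_range.mp hk
      rw [hg]
      simp only []
      rw [dif_pos (by omega), H2 i ⟨k, by omega⟩ hi hk', zero_mul]
    have hS2 : ∑ k ∈ Finset.range (m+ℓ-n), g ((n-ℓ)+k) = y i := by
      have e1 : ∑ k ∈ Finset.range (m+ℓ-n), g ((n-ℓ)+k)
          = ∑ j : Fin (m+ℓ-n),
              X22 ⟨(i:ℕ)-(n-ℓ), by have := i.isLt; omega⟩ j * x2 j := by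
        rw [← Fin.sum_univ_eq_sum_range (fun k => g ((n-ℓ)+k)) (m+ℓ-n)]
        refine Finset.sum_congr rfl fun j _ => ?_
        have hj' := j.isLt
        rw [hg]
        simp only []
        rw [dif_pos (by omega)]
        have hxk : x ⟨(n-ℓ)+(j:ℕ), by omega⟩ = x2 j := by
          rw [hx]; simp only []
          rw [dif_neg (by omega), dif_pos (by omega)]
          congr 1
          ext
          simp
        rw [hxk, H3 i ⟨(n-ℓ)+(j:ℕ), by omega⟩ hi (Nat.le_add_right _ _)
            (Nat.add_lt_add_left j.isLt _)]
        congr 2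
        · ext; simp
      rw [e1]
      have e2 : ∑ j : Fin (m+ℓ-n), X22 ⟨(i:ℕ)-(n-ℓ), by have := i.isLt; omega⟩ j * x2 j
          = X22.mulVec x2 ⟨(i:ℕ)-(n-ℓ), by have := i.isLt; omega⟩ := rfl
      rw [e2, hx2, hy2]
      simp only []
      congr 1
      apply Fin.eq_of_val_eq
      show n - ℓ + ((i:ℕ) - (n - ℓ)) = (i:ℕ)
      omega
    rw [hS1, hS2, hS3]
    ring
section
variable {F : Type*} [Field F] {m n ℓ : ℕ}

-- the B-matrix abstract facts
lemma range_le_aux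
    (hmn : m ≤ n) (hl2 : 2*ℓ ≤ n) (hlm : ℓ ≤ m)
    (X11 : Matrix (Fin (n-ℓ)) (Fin (n-ℓ)) F) (hX11 : IsUnit X11.det)
    (B : Matrix (Fin m) (Fin n) F)
    (hB0 : ∀ (i : Fin m) (j : Fin n), ℓ ≤ (i:ℕ) ∨ (j:ℕ) < n-ℓ → B i j = 0)
    (M : Matrix (Fin m) (Fin n) F)
    (H1 : ∀ (i : Fin m) (j : Fin n) (hi : (i:ℕ) < n-ℓ) (hj : (j:ℕ) < n-ℓ),
        M i j = X11 ⟨i, hi⟩ ⟨j, hj⟩)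
    (H2 : ∀ (i : Fin m) (j : Fin n), n-ℓ ≤ (i:ℕ) → (j:ℕ) < n-ℓ → M i j = 0) :
    LinearMap.range B.mulVecLin ≤ Submodule.map M.mulVecLin (LinearMap.ker B.mulVecLin) := by
  classical
  rintro _ ⟨xx, rfl⟩
  set w : Fin m → F := B.mulVecLin xx with hw
  have hw0 : ∀ i : Fin m, ℓ ≤ (i:ℕ) → w i = 0 := by
    intro i hi
    rw [hw, Matrix.mulVecLin_apply]
    show ∑ j, B i j * xx j = 0
    exact Finset.sum_eq_zero fun j _ => by rw [hB0 i j (Or.inl hi), zero_mul]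
  set chat : Fin (n-ℓ) → F := fun i0 =>
    if h : (i0:ℕ) < m then w ⟨i0, h⟩ else 0 with hchat
  set z1 : Fin (n-ℓ) → F := (X11⁻¹).mulVec chat with hz1
  have hz1' : X11.mulVec z1 = chat := by
    rw [hz1, Matrix.mulVec_mulVec, Matrix.mul_nonsing_inv _ hX11, Matrix.one_mulVec]
  set z : Fin n → F := fun j => if h : (j:ℕ) < n-ℓ then z1 ⟨j, h⟩ else 0 with hz
  refine ⟨z, ?_, ?_⟩
  · -- z ∈ ker B
    show B.mulVecLin z = 0
    funext i
    rw [Matrix.mulVecLin_apply]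
    show ∑ j, B i j * z j = 0
    refine Finset.sum_eq_zero fun j _ => ?_
    by_cases h : (j:ℕ) < n-ℓ
    · rw [hB0 i j (Or.inr h), zero_mul]
    · have : z j = 0 := by rw [hz]; simp only []; rw [dif_neg h]
      rw [this, mul_zero]
  · -- M z = w
    funext i
    rw [Matrix.mulVecLin_apply]
    show ∑ j, M i j * z j = w i
    set g : ℕ → F := fun k => if h : k < n then M i ⟨k, h⟩ * z ⟨k, h⟩ else 0 with hg
    have hsum : ∑ j, M i j * z j = ∑ k ∈ Finset.range n, g k := by
      rw [← Fin.sum_univ_eq_sum_range g n]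
      refine Finset.sum_congr rfl fun j _ => ?_
      rw [hg]; simp only [Fin.is_lt, dite_true, Fin.eta]
    rw [hsum, split3 g (n-ℓ) 0 n (by omega)]
    have h2' : ∑ k ∈ Finset.range 0, g ((n-ℓ) + k) = 0 := by simp
    have h3' : ∑ k ∈ Finset.range (n - ((n-ℓ)+0)), g ((n-ℓ)+0+k) = 0 := by
      refine Finset.sum_eq_zero fun k hk => ?_
      have hk' := Finset.mem_range.mp hk
      rw [hg]; simp only []
      rw [dif_pos (by omega)]
      have : z ⟨(n-ℓ)+0+k, by omega⟩ = 0 := by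
        rw [hz]; simp only []; rw [dif_neg (by omega)]
      rw [this, mul_zero]
    rw [h2', h3', add_zero, add_zero]
    by_cases hi : (i:ℕ) < n-ℓ
    · have e1 : ∑ k ∈ Finset.range (n-ℓ), g k
          = ∑ k ∈ Finset.range (n-ℓ),
            (fun k => if h : k < n-ℓ then X11 ⟨i, hi⟩ ⟨k, h⟩ * z1 ⟨k, h⟩ else 0) k := by
        refine Finset.sum_congr rfl fun k hk => ?_
        have hk' := Finset.mem_range.mp hk
        rw [hg]; simp only []
        rw [dif_pos (by omega), dif_pos hk']
        have : z ⟨k, by omega⟩ = z1 ⟨k, hk'⟩ := by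
          rw [hz]; simp only []; rw [dif_pos hk']
        rw [this, H1 i ⟨k, by omega⟩ hi hk']
      rw [e1, ← Fin.sum_univ_eq_sum_range
        (fun k => if h : k < n-ℓ then X11 ⟨i, hi⟩ ⟨k, h⟩ * z1 ⟨k, h⟩ else 0) (n-ℓ)]
      simp only [Fin.is_lt, dite_true, Fin.eta]
      have e2 : ∑ j0 : Fin (n-ℓ), X11 ⟨i, hi⟩ j0 * z1 j0 = X11.mulVec z1 ⟨i, hi⟩ := rfl
      rw [e2, hz1', hchat]
      simp only []
      rw [dif_pos (by have := i.isLt; omega)]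
    · have e1 : ∑ k ∈ Finset.range (n-ℓ), g k = 0 := by
        refine Finset.sum_eq_zero fun k hk => ?_
        have hk' := Finset.mem_range.mp hk
        rw [hg]; simp only []
        rw [dif_pos (by omega), H2 i ⟨k, by omega⟩ (by omega) hk', zero_mul]
      rw [e1, hw0 i (by omega)]

lemma rank_B_ge
    (hmn : m ≤ n) (hl2 : 2*ℓ ≤ n) (hlm : ℓ ≤ m)
    (Y : Matrix (Fin ℓ) (Fin ℓ) F) (hY : IsUnit Y.det)
    (B : Matrix (Fin m) (Fin n) F)
    (hB0 : ∀ (i : Fin m) (j : Fin n), ℓ ≤ (i:ℕ) ∨ (j:ℕ) < n-ℓ → B i j = 0)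
    (hBY : ∀ (i : Fin m) (j : Fin n) (hi : (i:ℕ) < ℓ) (hj : n-ℓ ≤ (j:ℕ)),
        B i j = Y ⟨i, hi⟩ ⟨(j:ℕ)-(n-ℓ), by have := j.isLt; omega⟩) :
    ℓ ≤ Module.finrank F (LinearMap.range B.mulVecLin) := by
  classical
  set Emat : Matrix (Fin n) (Fin ℓ) F := fun j c =>
    if h : n-ℓ ≤ (j:ℕ) then Y⁻¹ ⟨(j:ℕ)-(n-ℓ), by have := j.isLt; omega⟩ c else 0 with hE
  have hprod : ∀ (i : Fin m) (c : Fin ℓ),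
      (B * Emat) i c = if h : (i:ℕ) < ℓ then (1 : Matrix (Fin ℓ) (Fin ℓ) F) ⟨i, h⟩ c else 0 := by
    intro i c
    show ∑ j, B i j * Emat j c = _
    set g : ℕ → F := fun k => if h : k < n then B i ⟨k, h⟩ * Emat ⟨k, h⟩ c else 0 with hg
    have hsum : ∑ j, B i j * Emat j c = ∑ k ∈ Finset.range n, g k := by
      rw [← Fin.sum_univ_eq_sum_range g n]
      refine Finset.sum_congr rfl fun j _ => ?_
      rw [hg]; simp only [Fin.is_lt, dite_true, Fin.eta]
    rw [hsum, split3 g (n-ℓ) ℓ n (by omega)]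
    have h1' : ∑ k ∈ Finset.range (n-ℓ), g k = 0 := by
      refine Finset.sum_eq_zero fun k hk => ?_
      have hk' := Finset.mem_range.mp hk
      rw [hg]; simp only []
      rw [dif_pos (by omega), hB0 i ⟨k, by omega⟩ (Or.inr hk'), zero_mul]
    have h3' : ∑ k ∈ Finset.range (n - ((n-ℓ)+ℓ)), g ((n-ℓ)+ℓ+k) = 0 := by
      refine Finset.sum_eq_zero fun k hk => ?_
      have hk' := Finset.mem_range.mp hk
      rw [hg]
      simp only []
      rw [dif_neg (by omega)]
    rw [h1', h3', zero_add, add_zero]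
    by_cases hi : (i:ℕ) < ℓ
    · rw [dif_pos hi]
      have e1 : ∑ k ∈ Finset.range ℓ, g ((n-ℓ)+k)
          = ∑ k ∈ Finset.range ℓ,
            (fun k => if h : k < ℓ then Y ⟨i, hi⟩ ⟨k, h⟩ * Y⁻¹ ⟨k, h⟩ c else 0) k := by
        refine Finset.sum_congr rfl fun k hk => ?_
        have hk' := Finset.mem_range.mp hk
        rw [hg]; simp only []
        rw [dif_pos (by omega), dif_pos hk']
        rw [hBY i ⟨(n-ℓ)+k, by omega⟩ hi (Nat.le_add_right _ _)]
        rw [hE]; simp only []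
        rw [dif_pos (show n-ℓ ≤ (n-ℓ)+k from Nat.le_add_right _ _)]
        exact congrArg (fun z => Y ⟨(i:ℕ), hi⟩ z * Y⁻¹ z c)
          (Fin.eq_of_val_eq (show (n-ℓ)+k-(n-ℓ) = k by omega))
      rw [e1, ← Fin.sum_univ_eq_sum_range
        (fun k => if h : k < ℓ then Y ⟨i, hi⟩ ⟨k, h⟩ * Y⁻¹ ⟨k, h⟩ c else 0) ℓ]
      simp only [Fin.is_lt, dite_true, Fin.eta]
      have e2 : ∑ k0 : Fin ℓ, Y ⟨i, hi⟩ k0 * Y⁻¹ k0 c = (Y * Y⁻¹) ⟨i, hi⟩ c := rfl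
      rw [e2, Matrix.mul_nonsing_inv _ hY]
    · rw [dif_neg hi]
      refine Finset.sum_eq_zero fun k hk => ?_
      have hk' := Finset.mem_range.mp hk
      rw [hg]; simp only []
      rw [dif_pos (by omega), hB0 i ⟨(n-ℓ)+k, by omega⟩ (Or.inl (by omega)), zero_mul]
  -- injectivity
  have hinj : Function.Injective (B * Emat).mulVecLin := by
    intro c c' hcc
    funext x
    have hx := congrFun hcc ⟨(x:ℕ), by have := x.isLt; omega⟩
    rw [Matrix.mulVecLin_apply, Matrix.mulVecLin_apply] at hx
    have key : ∀ (d : Fin ℓ → F), (B * Emat).mulVec d ⟨(x:ℕ), by have := x.isLt; omega⟩ = d x := by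
      intro d
      show ∑ c0, (B * Emat) ⟨(x:ℕ), _⟩ c0 * d c0 = d x
      have : ∀ c0, (B * Emat) (⟨(x:ℕ), by have := x.isLt; omega⟩ : Fin m) c0
          = if x = c0 then 1 else 0 := by
        intro c0
        rw [hprod]
        rw [dif_pos (show ((⟨(x:ℕ), by have := x.isLt; omega⟩ : Fin m) : ℕ) < ℓ from x.isLt)]
        exact Matrix.one_apply
      calc ∑ c0, (B * Emat) ⟨(x:ℕ), by have := x.isLt; omega⟩ c0 * d c0
          = ∑ c0, (if x = c0 then 1 else 0) * d c0 := by
            refine Finset.sum_congr rfl fun c0 _ => ?_; rw [this c0]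
        _ = d x := by simp
    rw [key, key] at hx
    exact hx
  have hle : LinearMap.range (B * Emat).mulVecLin ≤ LinearMap.range B.mulVecLin := by
    rw [Matrix.mulVecLin_mul]
    rintro _ ⟨c, rfl⟩
    exact ⟨Emat.mulVecLin c, rfl⟩
  have h1 : Module.finrank F (LinearMap.range (B * Emat).mulVecLin) = ℓ := by
    have := LinearMap.finrank_range_add_finrank_ker (B * Emat).mulVecLin
    rw [LinearMap.ker_eq_bot.mpr hinj] at this
    simpa [Module.finrank_pi] using this
  calc ℓ = Module.finrank F (LinearMap.range (B * Emat).mulVecLin) := h1.symm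
    _ ≤ Module.finrank F (LinearMap.range B.mulVecLin) := Submodule.finrank_mono hle
end


lemma single_mul_sum {F : Type*} [Field F] {m : ℕ} (v : Fin m → F) (x : Fin m) :
    ∑ i : Fin m, (Pi.single i (1:F) : Fin m → F) x * v i = v x := by
  rw [Finset.sum_eq_single x]
  · rw [Pi.single_eq_same, one_mul]
  · intro i _ hne
    rw [Pi.single_eq_of_ne (Ne.symm hne), zero_mul]
  · intro h; exact absurd (Finset.mem_univ x) h

lemma matrix_eq_sum_single {F : Type*} [Field F] {m n : ℕ}
    (A : Matrix (Fin m) (Fin n) F) :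
    ∑ i, Matrix.vecMulVec (Pi.single i (1:F)) (A i) = A := by
  ext x y
  rw [Matrix.sum_apply]
  simp only [Matrix.vecMulVec_apply]
  exact single_mul_sum (fun i => A i y) x

lemma matrix_eq_sum_single' {F : Type*} [Field F] {m n ℓ : ℕ} (hlm : ℓ ≤ m)
    (B : Matrix (Fin m) (Fin n) F)
    (hBrow : ∀ (i : Fin m), ℓ ≤ (i:ℕ) → ∀ j, B i j = 0) :
    ∑ i1 : Fin ℓ, Matrix.vecMulVec (Pi.single (Fin.castLE hlm i1) (1:F)) (B (Fin.castLE hlm i1))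
      = B := by
  ext x y
  rw [Matrix.sum_apply]
  simp only [Matrix.vecMulVec_apply]
  by_cases hx : (x:ℕ) < ℓ
  · rw [Finset.sum_eq_single (⟨(x:ℕ), hx⟩ : Fin ℓ)]
    · have hc : Fin.castLE hlm (⟨(x:ℕ), hx⟩ : Fin ℓ) = x := Fin.eq_of_val_eq rfl
      rw [hc, Pi.single_eq_same, one_mul]
    · intro i1 _ hne
      have : x ≠ Fin.castLE hlm i1 := by
        intro hcon
        refine hne (Fin.eq_of_val_eq ?_)
        have := congrArg Fin.val hcon
        simpa using this.symm
      rw [Pi.single_eq_of_ne this, zero_mul]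
    · intro h; exact absurd (Finset.mem_univ _) h
  · rw [Finset.sum_eq_zero, hBrow x (by omega) y]
    intro i1 _
    have : x ≠ Fin.castLE hlm i1 := by
      intro hcon
      have := congrArg Fin.val hcon
      simp at this
      omega
    rw [Pi.single_eq_of_ne this, zero_mul]

lemma decomp_upper {F : Type*} [Field F] {m n ℓ : ℕ} (hlm : ℓ ≤ m)
    (A B : Matrix (Fin m) (Fin n) F)
    (hBrow : ∀ (i : Fin m), ℓ ≤ (i:ℕ) → ∀ j, B i j = 0) :
    pairDecomp (m + ℓ) A B := by
  classical
  refine ⟨Fin.addCases (fun i0 : Fin m => Pi.single i0 1)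
      (fun i1 : Fin ℓ => Pi.single (Fin.castLE hlm i1) 1),
    Fin.addCases (fun i0 : Fin m => A i0) (fun i1 : Fin ℓ => B (Fin.castLE hlm i1)),
    Fin.addCases (fun _ => 1) (fun _ => 0),
    Fin.addCases (fun _ => 0) (fun _ => 1), ?_, ?_⟩
  · rw [Fin.sum_univ_add]
    simp only [Fin.addCases_left, Fin.addCases_right, one_smul, zero_smul]
    rw [Finset.sum_const, smul_zero, add_zero, _root_.matrix_eq_sum_single]
  · rw [Fin.sum_univ_add]
    simp only [Fin.addCases_left, Fin.addCases_right, one_smul, zero_smul]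
    rw [Finset.sum_const, smul_zero, zero_add, matrix_eq_sum_single' hlm B hBrow]


lemma build_W {F : Type*} [Field F] {n m : ℕ}
    (𝒜 ℬ : (Fin n → F) →ₗ[F] (Fin m → F))
    (hrange : LinearMap.range ℬ ≤ Submodule.map 𝒜 (LinearMap.ker ℬ)) :
    ∃ Wb : (Fin n → F) →ₗ[F] (Fin n → F),
      (∀ x, 𝒜 (Wb x) = ℬ x) ∧ (∀ x, Wb (Wb x) = 0) ∧
      (∀ x ∈ LinearMap.range Wb, 𝒜 x = 0 → x = 0) ∧
      Module.finrank F (LinearMap.range ℬ) ≤ Module.finrank F (LinearMap.range Wb) := by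
  classical
  set Z := LinearMap.ker ℬ with hZ
  set f : Z →ₗ[F] (Fin m → F) := 𝒜 ∘ₗ Z.subtype with hf
  have hrangef : LinearMap.range f = Submodule.map 𝒜 Z := by
    rw [hf, LinearMap.range_comp, Submodule.range_subtype]
  have h' : LinearMap.range ℬ ≤ LinearMap.range f := by rw [hrangef]; exact hrange
  obtain ⟨σ, hσ⟩ := LinearMap.exists_rightInverse_of_surjective
    (f.rangeRestrict) (LinearMap.range_rangeRestrict f)
  set Wb : (Fin n → F) →ₗ[F] (Fin n → F) :=
    Z.subtype ∘ₗ σ ∘ₗ (Submodule.inclusion h') ∘ₗ ℬ.rangeRestrict with hWb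
  have hfσ : ∀ y : LinearMap.range f, f (σ y) = (y : Fin m → F) := by
    intro y
    have := LinearMap.congr_fun hσ y
    exact congrArg Subtype.val this
  have hAW : ∀ x, 𝒜 (Wb x) = ℬ x := by
    intro x
    have : 𝒜 (Wb x) = f (σ (Submodule.inclusion h' (ℬ.rangeRestrict x))) := rfl
    rw [this, hfσ]
    rfl
  have hmemZ : ∀ x, Wb x ∈ Z := fun x => (σ (Submodule.inclusion h' (ℬ.rangeRestrict x))).2
  have hker0 : ∀ x, ℬ x = 0 → Wb x = 0 := by
    intro x hx
    have : ℬ.rangeRestrict x = 0 := Subtype.ext (by simpa using hx)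
    rw [hWb]
    simp [this]
  have hW2 : ∀ x, Wb (Wb x) = 0 := by
    intro x
    exact hker0 _ (LinearMap.mem_ker.mp (hmemZ x))
  refine ⟨Wb, hAW, hW2, ?_, ?_⟩
  · rintro x ⟨y, rfl⟩ hx
    rw [hAW] at hx
    exact hker0 y hx
  · have hcomp : ℬ = 𝒜 ∘ₗ Wb := by
      ext x
      simp [LinearMap.comp_apply, hAW]
    have : LinearMap.range ℬ = Submodule.map 𝒜 (LinearMap.range Wb) := by
      rw [hcomp, LinearMap.range_comp]
    rw [this]
    exact Submodule.finrank_map_le _ _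

end AuxiliaryLemmas
/-- The rank of the pair `(A; B)` with `A = [[X₁₁, X₁₂, O], [O, X₂₂, O]]` and
`B = [[O, Y], [O, O]]` (with `Y` in the last `ℓ` columns of the first `ℓ` rows) is
`m + ℓ`. -/
theorem pairRank_block_eq {F : Type*} [RCLike F] {m n ℓ : ℕ}
    (hm : m ≤ n) (hn : n ≤ 2 * m) (hl : ℓ ≤ n / 2)
    (X11 : Matrix (Fin (n - ℓ)) (Fin (n - ℓ)) F) (hX11 : IsUnit X11.det)
    (X12 : Matrix (Fin (n - ℓ)) (Fin (m + ℓ - n)) F)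
    (X22 : Matrix (Fin (m + ℓ - n)) (Fin (m + ℓ - n)) F) (hX22 : IsUnit X22.det)
    (Y : Matrix (Fin ℓ) (Fin ℓ) F) (hY : IsUnit Y.det)
    (A B : Matrix (Fin m) (Fin n) F)
    (hA : A = Matrix.of fun (i : Fin m) (j : Fin n) =>
      if hi : (i : ℕ) < n - ℓ then
        if hj : (j : ℕ) < n - ℓ then X11 ⟨i, hi⟩ ⟨j, hj⟩
        else if hj2 : (j : ℕ) < (n - ℓ) + (m + ℓ - n) then
          X12 ⟨i, hi⟩ ⟨(j : ℕ) - (n - ℓ), by omega⟩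
        else 0
      else
        if hj : n - ℓ ≤ (j : ℕ) ∧ (j : ℕ) < (n - ℓ) + (m + ℓ - n) then
          X22 ⟨(i : ℕ) - (n - ℓ), by have := i.isLt; omega⟩ ⟨(j : ℕ) - (n - ℓ), by omega⟩
        else 0)
    (hB : B = Matrix.of fun (i : Fin m) (j : Fin n) =>
      if hi : (i : ℕ) < ℓ then
        if hj : n - ℓ ≤ (j : ℕ) then
          Y ⟨i, hi⟩ ⟨(j : ℕ) - (n - ℓ), by have := j.isLt; omega⟩
        else 0
      else 0) :
    pairRank A B = m + ℓ := by

  classical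
  have hl2 : 2*ℓ ≤ n := by omega
  have hlm : ℓ ≤ m := by omega
  have hA11 : ∀ (i : Fin m) (j : Fin n) (hi : (i:ℕ) < n-ℓ) (hj : (j:ℕ) < n-ℓ),
      A i j = X11 ⟨i, hi⟩ ⟨j, hj⟩ := by
    intro i j hi hj
    rw [hA]
    simp only [Matrix.of_apply]
    rw [dif_pos hi, dif_pos hj]
  have hA22 : ∀ (i : Fin m) (j : Fin n) (hi : n-ℓ ≤ (i:ℕ)) (hj1 : n-ℓ ≤ (j:ℕ))
      (hj2 : (j:ℕ) < (n-ℓ)+(m+ℓ-n)),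
      A i j = X22 ⟨(i:ℕ)-(n-ℓ), by have := i.isLt; omega⟩ ⟨(j:ℕ)-(n-ℓ), by omega⟩ := by
    intro i j hi hj1 hj2
    rw [hA]
    simp only [Matrix.of_apply]
    rw [dif_neg (by omega), dif_pos ⟨hj1, hj2⟩]
  have hA0 : ∀ (i : Fin m) (j : Fin n), n-ℓ ≤ (i:ℕ) →
      ((j:ℕ) < n-ℓ ∨ (n-ℓ)+(m+ℓ-n) ≤ (j:ℕ)) → A i j = 0 := by
    intro i j hi hj
    rw [hA]
    simp only [Matrix.of_apply]
    rw [dif_neg (by omega), dif_neg (by omega)]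
  have hB0 : ∀ (i : Fin m) (j : Fin n), ℓ ≤ (i:ℕ) ∨ (j:ℕ) < n-ℓ → B i j = 0 := by
    intro i j hij
    rw [hB]
    simp only [Matrix.of_apply]
    rcases hij with h | h
    · rw [dif_neg (by omega)]
    · by_cases h1 : (i:ℕ) < ℓ
      · rw [dif_pos h1, dif_neg (by omega)]
      · rw [dif_neg h1]
  have hBY : ∀ (i : Fin m) (j : Fin n) (hi : (i:ℕ) < ℓ) (hj : n-ℓ ≤ (j:ℕ)),
      B i j = Y ⟨i, hi⟩ ⟨(j:ℕ)-(n-ℓ), by have := j.isLt; omega⟩ := by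
    intro i j hi hj
    rw [hB]
    simp only [Matrix.of_apply]
    rw [dif_pos hi, dif_pos hj]
  have lower : ∀ r : ℕ, pairDecomp r A B → m + ℓ ≤ r := by
    rintro r ⟨a, b, α, β, hA1, hB1⟩
    set bad : Finset F := Finset.univ.image (fun i : Fin r => -(α i) / (β i)) with hbad
    obtain ⟨lam0, hlam0⟩ := Infinite.exists_notMem_finset bad
    have hγ : ∀ i : Fin r, α i + lam0 * β i = 0 → α i = 0 ∧ β i = 0 := by
      intro i h
      by_cases hβ : β i = 0
      · exact ⟨by simpa [hβ] using h, hβ⟩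
      · exfalso
        apply hlam0
        rw [hbad]
        refine Finset.mem_image.mpr ⟨i, Finset.mem_univ i, ?_⟩
        rw [div_eq_iff hβ]
        linear_combination -h
    set M : Matrix (Fin m) (Fin n) F := A + lam0 • B with hM
    have hMA : ∀ (i : Fin m) (j : Fin n), M i j = A i j + lam0 * B i j := by
      intro i j
      rw [hM, Matrix.add_apply, Matrix.smul_apply, smul_eq_mul]
    have H1 : ∀ (i : Fin m) (j : Fin n) (hi : (i:ℕ) < n-ℓ) (hj : (j:ℕ) < n-ℓ),
        M i j = X11 ⟨i, hi⟩ ⟨j, hj⟩ := by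
      intro i j hi hj
      rw [hMA, hA11 i j hi hj, hB0 i j (Or.inr hj)]; ring
    have H2 : ∀ (i : Fin m) (j : Fin n), n-ℓ ≤ (i:ℕ) → (j:ℕ) < n-ℓ → M i j = 0 := by
      intro i j hi hj
      rw [hMA, hA0 i j hi (Or.inl hj), hB0 i j (Or.inr hj)]; ring
    have H3 : ∀ (i : Fin m) (j : Fin n) (hi : n-ℓ ≤ (i:ℕ)) (hj1 : n-ℓ ≤ (j:ℕ))
        (hj2 : (j:ℕ) < (n-ℓ)+(m+ℓ-n)),
        M i j = X22 ⟨(i:ℕ)-(n-ℓ), by have := i.isLt; omega⟩ ⟨(j:ℕ)-(n-ℓ), by omega⟩ := by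
      intro i j hi hj1 hj2
      rw [hMA, hA22 i j hi hj1 hj2, hB0 i j (Or.inl (by omega))]; ring
    have H4 : ∀ (i : Fin m) (j : Fin n), n-ℓ ≤ (i:ℕ) → (n-ℓ)+(m+ℓ-n) ≤ (j:ℕ) → M i j = 0 := by
      intro i j hi hj
      rw [hMA, hA0 i j hi (Or.inr hj), hB0 i j (Or.inl (by omega))]; ring
    have hsurjM : Function.Surjective M.mulVecLin :=
      surj_aux hm hl2 hlm X11 hX11 X22 hX22 M H1 H2 H3 H4
    have hrange : LinearMap.range B.mulVecLin
        ≤ Submodule.map M.mulVecLin (LinearMap.ker B.mulVecLin) :=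
      range_le_aux hm hl2 hlm X11 hX11 B hB0 M H1 H2
    obtain ⟨Wb, hWA, hW2, hWdisj, hWrank⟩ := build_W M.mulVecLin B.mulVecLin hrange
    set Umat : Matrix (Fin m) (Fin r) F := fun x i =>
      if α i + lam0 * β i = 0 then 0 else (α i + lam0 * β i) * a i x with hU
    set Vmat : Matrix (Fin r) (Fin n) F := fun i j => b i j with hV
    set t : Fin r → F := fun i =>
      if α i + lam0 * β i = 0 then 0 else β i / (α i + lam0 * β i) with ht
    have hMUV : M = Umat * Vmat := by
      rw [hM, hA1, hB1]
      ext x y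
      rw [Matrix.add_apply, Matrix.smul_apply, smul_eq_mul, Matrix.sum_apply, Matrix.sum_apply,
        Matrix.mul_apply, Finset.mul_sum, ← Finset.sum_add_distrib]
      refine Finset.sum_congr rfl fun i _ => ?_
      rw [Matrix.smul_apply, Matrix.smul_apply, Matrix.vecMulVec_apply, smul_eq_mul, smul_eq_mul]
      rw [hU, hV]
      simp only []
      by_cases h : α i + lam0 * β i = 0
      · obtain ⟨h1, h2⟩ := hγ i h
        rw [if_pos h, h1, h2]; ring
      · rw [if_neg h]; ring
    have hBUV : B = Umat * Matrix.diagonal t * Vmat := by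
      rw [hB1]
      ext x y
      rw [Matrix.sum_apply]
      have e0 : (Umat * Matrix.diagonal t * Vmat) x y = ∑ i, Umat x i * (t i * Vmat i y) := by
        rw [Matrix.mul_assoc, Matrix.mul_apply]
        refine Finset.sum_congr rfl fun i _ => ?_
        rw [Matrix.diagonal_mul]
      rw [e0]
      refine Finset.sum_congr rfl fun i _ => ?_
      rw [Matrix.smul_apply, Matrix.vecMulVec_apply, smul_eq_mul, hU, hV, ht]
      simp only []
      by_cases h : α i + lam0 * β i = 0
      · obtain ⟨h1, h2⟩ := hγ i h
        rw [if_pos h, if_pos h, h2]; ring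
      · rw [if_neg h, if_neg h]
        have hs : (α i + lam0 * β i) * (β i / (α i + lam0 * β i)) = β i := mul_div_cancel₀ _ h
        linear_combination -(a i x * b i y) * hs
    have hcore := core_bound Umat Vmat t Wb (hMUV ▸ hsurjM)
      hW2 (by intro x; rw [← hMUV, hWA x, hBUV]) (by rw [← hMUV]; exact hWdisj)
    have hBrank : ℓ ≤ Module.finrank F (LinearMap.range B.mulVecLin) :=
      rank_B_ge hm hl2 hlm Y hY B hB0 hBY
    omega
  have hupper : pairDecomp (m + ℓ) A B :=
    decomp_upper hlm A B (fun i hi j => hB0 i j (Or.inl hi))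
  apply le_antisymm
  · exact Nat.sInf_le hupper
  · exact le_csInf ⟨m + ℓ, hupper⟩ lower
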